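/- Let k ≥ l > 1 and let v ∈ V∖B be a vertex with l ≤ l_c. Then F_{k,l}^{vv} = ⋃_{w ∈ V, w ≠ v, (w,v) ∈ A} F_{k−1,l−1}^{vw}. -/

import Mathlib

/-- An element of a path-cycle packing: a list of vertices together with a flag
telling whether it is a cycle (`true`) or a path (`false`). -/
structure PCElem (V : Type*) where
  verts : List V
  isCycle : Bool

/-- A valid element w.r.t. the arc relation `A`: the vertices are distinct,
consecutive vertices are joined by arcs, there are at least two vertices
(so paths have length ≥ 1 and cycles have length ≥ 2), and for a cycle the
last vertex is joined back to the first. -/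
def ValidElem {V : Type*} (A : V → V → Prop) (e : PCElem V) : Prop :=
  e.verts.Nodup ∧ e.verts.Chain' A ∧ 2 ≤ e.verts.length ∧
    (e.isCycle = true → ∀ h : e.verts ≠ [], A (e.verts.getLast h) (e.verts.head h))

/-- The length (number of arcs) of an element: a cycle on `k` vertices has length `k`,
a path on `k` vertices has length `k - 1`. -/
def elemLen {V : Type*} (e : PCElem V) : ℕ :=
  if e.isCycle then e.verts.length else e.verts.length - 1

/-- The vertex set of an element. -/
def elemVerts {V : Type*} [DecidableEq V] (e : PCElem V) : Finset V :=
  e.verts.toFinset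

/-- A path-cycle packing: a finite set of valid, pairwise vertex-disjoint
paths and cycles. -/
def IsPacking {V : Type*} [DecidableEq V] (A : V → V → Prop)
    (D : Finset (PCElem V)) : Prop :=
  (∀ e ∈ D, ValidElem A e) ∧
    (D : Set (PCElem V)).Pairwise fun e f => Disjoint (elemVerts e) (elemVerts f)

/-- `c(D)`: the total length of a packing. -/
def packLen {V : Type*} (D : Finset (PCElem V)) : ℕ :=
  ∑ e ∈ D, elemLen e

/-- `V(D)`: the set of vertices appearing in a packing. -/
def packVerts {V : Type*} [DecidableEq V] (D : Finset (PCElem V)) : Finset V :=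
  D.biUnion elemVerts

/-- A feasible path: starts at an altruistic vertex of `B` and has length at most `lp`. -/
def FeasPath {V : Type*} (B : Set V) (lp : ℕ) (e : PCElem V) : Prop :=
  e.isCycle = false ∧ (∃ b ∈ B, e.verts.head? = some b) ∧ e.verts.length - 1 ≤ lp

/-- A feasible cycle: contains no vertex of `B` and has length at most `lc`. -/
def FeasCycle {V : Type*} (B : Set V) (lc : ℕ) (e : PCElem V) : Prop :=
  e.isCycle = true ∧ (∀ w ∈ e.verts, w ∉ B) ∧ e.verts.length ≤ lc

/-- A feasible element: a feasible path or a feasible cycle. -/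
def FeasElem {V : Type*} (B : Set V) (lp lc : ℕ) (e : PCElem V) : Prop :=
  FeasPath B lp e ∨ FeasCycle B lc e

/-- A feasible path-cycle packing. -/
def FeasPacking {V : Type*} [DecidableEq V] (A : V → V → Prop) (B : Set V)
    (lp lc : ℕ) (D : Finset (PCElem V)) : Prop :=
  IsPacking A D ∧ ∀ e ∈ D, FeasElem B lp lc e

/-- A semi-feasible element: a feasible path, a feasible cycle, or a path of
length at most `lc` containing no vertex of `B`. -/
def SemiElem {V : Type*} (B : Set V) (lp lc : ℕ) (e : PCElem V) : Prop :=
  FeasElem B lp lc e ∨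
    (e.isCycle = false ∧ (∀ w ∈ e.verts, w ∉ B) ∧ e.verts.length - 1 ≤ lc)

/-- `e` is a `D_l^{vu}`: a path of length `l` from `v` to `u` when `v ≠ u`, and a
cycle of length `l` through `v` when `v = u`. -/
def IsDlvu {V : Type*} [DecidableEq V] (v u : V) (l : ℕ) (e : PCElem V) : Prop :=
  if v = u then
    e.isCycle = true ∧ v ∈ e.verts ∧ e.verts.length = l
  else
    e.isCycle = false ∧ e.verts.head? = some v ∧ e.verts.getLast? = some u ∧
      e.verts.length = l + 1

/-- `F_{k,l}^{vu}`: the collection of vertex sets `V(D)` over all semi-feasible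
packings `D = P ∪ C ∪ {D_l^{vu}}` with `c(D) = k`; the distinguished element
`D_l^{vu}` is semi-feasible and every other element is feasible. -/
def FF {V : Type*} [DecidableEq V] (A : V → V → Prop) (B : Set V) (lp lc : ℕ)
    (k l : ℕ) (v u : V) : Set (Finset V) :=
  { S | ∃ (D : Finset (PCElem V)) (e : PCElem V),
      IsPacking A D ∧ e ∈ D ∧ IsDlvu v u l e ∧ SemiElem B lp lc e ∧
      (∀ f ∈ D, f ≠ e → FeasElem B lp lc f) ∧ packLen D = k ∧ packVerts D = S }

/-- `F ⊎ T = { X ∪ T : X ∈ F, X ∩ T = ∅ }` for a collection of finite sets. -/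
def uplusS {V : Type*} [DecidableEq V] (F : Set (Finset V)) (T : Finset V) :
    Set (Finset V) :=
  { Z | ∃ X ∈ F, Disjoint X T ∧ Z = X ∪ T }


lemma chain'_rotate' {V : Type*} {A : V → V → Prop} (xs ys : List V) (v : V)
    (hch : List.Chain' A (xs ++ v :: ys))
    (hwrap : ∀ x ∈ (xs ++ v :: ys).getLast?, ∀ y ∈ (xs ++ v :: ys).head?, A x y) :
    List.Chain' A ((v :: ys) ++ xs) := by
  rw [List.Chain', List.isChain_split] at hch
  rw [List.Chain', List.isChain_append]
  refine ⟨hch.2, (List.isChain_append.mp hch.1).1, ?_⟩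
  intro x hx y hy
  apply hwrap
  · rw [List.getLast?_append]
    cases ys with
    | nil => simp_all
    | cons a t => simp_all [List.getLast?_append]
  · rw [List.head?_append]
    cases xs with
    | nil => simp_all
    | cons a t => simp_all

lemma lastarc {V : Type*} {A : V → V → Prop} (xs ys : List V) (v : V)
    (hch : List.Chain' A (xs ++ v :: ys))
    (hwrap : ∀ x ∈ (xs ++ v :: ys).getLast?, ∀ y ∈ (xs ++ v :: ys).head?, A x y) :
    ∀ x ∈ ((v :: ys) ++ xs).getLast?, A x v := by
  intro x hx
  rw [List.getLast?_append] at hx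
  cases xs with
  | nil =>
    simp only [List.getLast?_nil, Option.or_none, Option.none_or] at hx ⊢
    exact hwrap x (by simpa using hx) v (by simp)
  | cons a t =>
    rw [List.Chain', List.isChain_split] at hch
    have hlink := (List.isChain_append.mp hch.1).2.2
    have : ((a :: t).getLast?).isSome := by simp [List.getLast?_eq_getLast]
    obtain ⟨z, hz⟩ := Option.isSome_iff_exists.mp this
    rw [hz] at hx
    obtain rfl : z = x := by simpa [Option.or] using hx
    exact hlink _ hz v (by simp)

/-- (Case (iv) of the DP recurrence) For `k ≥ l > 1` and a vertex `v ∉ B` with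
`l ≤ l_c`: `F_{k,l}^{vv} = ⋃_{w ≠ v, (w,v) ∈ A} F_{k-1,l-1}^{vw}`. -/
lemma mem_of_getLast?' {α : Type*} {l : List α} {a : α} (h : l.getLast? = some a) : a ∈ l := by
  obtain ⟨hne, h2⟩ := List.mem_getLast?_eq_getLast h
  rw [h2]; exact List.getLast_mem hne

instance {V : Type*} [DecidableEq V] : DecidableEq (PCElem V) :=
  fun a b => decidable_of_iff (a.verts = b.verts ∧ a.isCycle = b.isCycle)
    (by cases a; cases b; simp)

theorem FF_recurrence_close_cycle {V : Type*} [Fintype V] [DecidableEq V]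
    (A : V → V → Prop) (B : Set V) (lp lc : ℕ)
    (hloop : ∀ v, ¬ A v v) (hB : ∀ v u, A v u → u ∉ B)
    (k l : ℕ) (v : V) (hkl : l ≤ k) (hl : 1 < l) (hvB : v ∉ B) (hlc : l ≤ lc) :
    FF A B lp lc k l v v =
      ⋃ (w : V) (_ : w ≠ v) (_ : A w v), FF A B lp lc (k - 1) (l - 1) v w := by
  ext S
  simp only [Set.mem_iUnion]
  constructor
  · rintro ⟨D, e, hP, heD, hDl, hSemi, hFeas, hLen, hVerts⟩
    rw [IsDlvu, if_pos rfl] at hDl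
    obtain ⟨hcyc, hvmem, hlen⟩ := hDl
    obtain ⟨hnd, hch, hlen2, hwrapv⟩ := hP.1 e heD
    have hne : e.verts ≠ [] := by
      intro h; rw [h] at hlen2; simp at hlen2
    have hwrap : ∀ x ∈ e.verts.getLast?, ∀ y ∈ e.verts.head?, A x y := by
      intro x hx y hy
      rw [List.getLast?_eq_getLast hne, Option.mem_def, Option.some.injEq] at hx
      rw [List.head?_eq_head hne, Option.mem_def, Option.some.injEq] at hy
      rw [← hx, ← hy]
      exact hwrapv hcyc hne
    obtain ⟨xs, ys, hsplit⟩ := List.append_of_mem hvmem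
    rw [hsplit] at hch hwrap hnd
    set L : List V := (v :: ys) ++ xs with hL
    have hperm : (xs ++ v :: ys).Perm L := List.perm_append_comm
    have hLnd : L.Nodup := hperm.nodup hnd
    have hLch : List.Chain' A L := chain'_rotate' xs ys v hch hwrap
    have hLlen : L.length = l := by
      have h1 := hperm.length_eq
      have h2 : e.verts.length = (xs ++ v :: ys).length := by rw [hsplit]
      omega
    have hLne : L ≠ [] := by simp [hL]
    obtain ⟨w, hw⟩ : ∃ w, L.getLast? = some w :=
      Option.isSome_iff_exists.mp (List.getLast?_isSome.mpr hLne)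
    have hwmem : w ∈ L := mem_of_getLast?' hw
    have hAwv : A w v := lastarc xs ys v hch hwrap w hw
    have htne : ys ++ xs ≠ [] := by
      intro h2
      have : L.length = 1 := by
        rw [hL, List.cons_append, ← List.cons_append]
        simp [h2]
      omega
    have hwv : w ≠ v := by
      intro h
      have hL2 : L = [v] ++ (ys ++ xs) := by simp [hL]
      rw [hL2, List.getLast?_append] at hw
      have hsome := List.getLast?_isSome.mpr htne
      obtain ⟨z, hz⟩ := Option.isSome_iff_exists.mp hsome
      rw [hz] at hw
      simp only [Option.or] at hw
      have hwin : w ∈ ys ++ xs := mem_of_getLast?' (hw ▸ hz)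
      have hvnotin : v ∉ ys ++ xs := by
        have : L = v :: (ys ++ xs) := by simp [hL]
        rw [this] at hLnd
        exact (List.nodup_cons.mp hLnd).1
      rw [h] at hwin
      exact hvnotin hwin
    set e' : PCElem V := ⟨L, false⟩ with he'
    have hEV : elemVerts e' = elemVerts e := by
      simp only [elemVerts, he']
      rw [hsplit]
      exact (List.toFinset_eq_of_perm _ _ hperm).symm
    have hene' : e ≠ e' := by
      intro h; rw [h] at hcyc; simp [he'] at hcyc
    have he'nerase : e' ∉ D.erase e := by
      intro h
      have h1 : e' ∈ D := Finset.mem_of_mem_erase h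
      have h2 : e' ≠ e := Finset.ne_of_mem_erase h
      have hdisj : Disjoint (elemVerts e') (elemVerts e) :=
        hP.2 (Finset.mem_coe.mpr h1) (Finset.mem_coe.mpr heD) h2
      rw [hEV] at hdisj
      have hemp : (elemVerts e) = ∅ := disjoint_self.mp hdisj
      have : v ∈ elemVerts e := by simp [elemVerts, hvmem]
      simp_all
    set D' : Finset (PCElem V) := insert e' (D.erase e) with hD'
    refine ⟨w, hwv, hAwv, D', e', ?_, Finset.mem_insert_self _ _, ?_, ?_, ?_, ?_, ?_⟩
    · constructor
      · intro f hf
        rcases Finset.mem_insert.mp hf with h | h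
        · subst h
          refine ⟨hLnd, hLch, by show 2 ≤ L.length; omega, ?_⟩
          intro h; simp [he'] at h
        · exact hP.1 f (Finset.mem_of_mem_erase h)
      · rw [hD', Finset.coe_insert]
        rw [@Set.pairwise_insert_of_symmetric _ _ _ _ ⟨fun a b h => h.symm⟩]
        constructor
        · exact hP.2.mono (Finset.coe_subset.mpr (Finset.erase_subset _ _))
        · intro b hb hbe'
          have hbD : b ∈ D := Finset.mem_of_mem_erase (Finset.mem_coe.mp hb)
          have hbne : b ≠ e := Finset.ne_of_mem_erase (Finset.mem_coe.mp hb)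
          show Disjoint (elemVerts e') (elemVerts b)
          rw [hEV]
          exact hP.2 (Finset.mem_coe.mpr heD) (Finset.mem_coe.mpr hbD) (Ne.symm hbne)
    · rw [IsDlvu, if_neg (Ne.symm hwv)]
      refine ⟨rfl, ?_, hw, by show L.length = l - 1 + 1; omega⟩
      simp [he', hL]
    · right
      refine ⟨rfl, ?_, by show L.length - 1 ≤ lc; omega⟩
      rcases hSemi with (⟨h1, _⟩ | ⟨_, hnB, _⟩) | ⟨h1, _⟩
      · rw [h1] at hcyc; simp at hcyc
      · intro u hu
        apply hnB
        rw [hsplit]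
        exact hperm.mem_iff.mpr hu
      · rw [h1] at hcyc; simp at hcyc
    · intro f hf hfe'
      rcases Finset.mem_insert.mp hf with h | h
      · exact absurd h hfe'
      · exact hFeas f (Finset.mem_of_mem_erase h) (Finset.ne_of_mem_erase h)
    · have h1 : packLen D' = elemLen e' + ∑ f ∈ D.erase e, elemLen f :=
        Finset.sum_insert he'nerase
      have h2 : ∑ f ∈ D.erase e, elemLen f + elemLen e = packLen D :=
        Finset.sum_erase_add D _ heD
      have h3 : elemLen e = l := by simp [elemLen, hcyc, hlen]
      have h4 : elemLen e' = l - 1 := by show (if false = true then L.length else L.length - 1) = l - 1; simp [hLlen]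
      omega
    · rw [← hVerts, packVerts, packVerts, hD', Finset.biUnion_insert, hEV,
        ← Finset.biUnion_insert, Finset.insert_erase heD]
  · rintro ⟨w, hwv, hAwv, D, e', hP, he'D, hDl, hSemi, hFeas, hLen, hVerts⟩
    rw [IsDlvu, if_neg (Ne.symm hwv)] at hDl
    obtain ⟨hcyc, hhead, hlast, hlen⟩ := hDl
    obtain ⟨hnd, hch, hlen2, _⟩ := hP.1 e' he'D
    have hne : e'.verts ≠ [] := by intro h; rw [h] at hlen2; simp at hlen2
    have hheadv : e'.verts.head hne = v := by
      rw [List.head?_eq_head hne] at hhead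
      exact Option.some_inj.mp hhead
    have hlastw : e'.verts.getLast hne = w := by
      rw [List.getLast?_eq_getLast hne] at hlast
      exact Option.some_inj.mp hlast
    have hvmem : v ∈ e'.verts := hheadv ▸ List.head_mem hne
    set e : PCElem V := ⟨e'.verts, true⟩ with he
    have hEV : elemVerts e = elemVerts e' := rfl
    have hene' : e ≠ e' := by
      intro h
      have : e.isCycle = e'.isCycle := by rw [h]
      rw [hcyc] at this; simp [he] at this
    have henerase : e ∉ D.erase e' := by
      intro h
      have h1 : e ∈ D := Finset.mem_of_mem_erase h
      have h2 : e ≠ e' := Finset.ne_of_mem_erase h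
      have hdisj : Disjoint (elemVerts e) (elemVerts e') :=
        hP.2 (Finset.mem_coe.mpr h1) (Finset.mem_coe.mpr he'D) h2
      rw [hEV] at hdisj
      have hemp : (elemVerts e') = ∅ := disjoint_self.mp hdisj
      have : v ∈ elemVerts e' := by simp [elemVerts, hvmem]
      simp_all
    set D' : Finset (PCElem V) := insert e (D.erase e') with hD'
    refine ⟨D', e, ?_, Finset.mem_insert_self _ _, ?_, ?_, ?_, ?_, ?_⟩
    · constructor
      · intro f hf
        rcases Finset.mem_insert.mp hf with h | h
        · subst h
          refine ⟨hnd, hch, by show 2 ≤ e'.verts.length; omega, ?_⟩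
          intro _ hne2
          have h1 : e.verts.getLast hne2 = w := hlastw
          have h2 : e.verts.head hne2 = v := hheadv
          rw [h1, h2]
          exact hAwv
        · exact hP.1 f (Finset.mem_of_mem_erase h)
      · rw [hD', Finset.coe_insert]
        rw [@Set.pairwise_insert_of_symmetric _ _ _ _ ⟨fun a b h => h.symm⟩]
        constructor
        · exact hP.2.mono (Finset.coe_subset.mpr (Finset.erase_subset _ _))
        · intro b hb hbe
          have hbD : b ∈ D := Finset.mem_of_mem_erase (Finset.mem_coe.mp hb)
          have hbne : b ≠ e' := Finset.ne_of_mem_erase (Finset.mem_coe.mp hb)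
          show Disjoint (elemVerts e) (elemVerts b)
          rw [hEV]
          exact hP.2 (Finset.mem_coe.mpr he'D) (Finset.mem_coe.mpr hbD) (Ne.symm hbne)
    · rw [IsDlvu, if_pos rfl]
      exact ⟨rfl, hvmem, by show e'.verts.length = l; omega⟩
    · left; right
      refine ⟨rfl, ?_, by show e'.verts.length ≤ lc; omega⟩
      rcases hSemi with (⟨_, ⟨b, hbB, hb⟩, _⟩ | ⟨h1, _, _⟩) | ⟨_, hnB, _⟩
      · rw [hhead] at hb
        have : b = v := by simpa using hb.symm
        rw [this] at hbB
        exact absurd hbB hvB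
      · rw [h1] at hcyc; simp at hcyc
      · intro u hu; exact hnB u hu
    · intro f hf hfe
      rcases Finset.mem_insert.mp hf with h | h
      · exact absurd h hfe
      · exact hFeas f (Finset.mem_of_mem_erase h) (Finset.ne_of_mem_erase h)
    · have h1 : packLen D' = elemLen e + ∑ f ∈ D.erase e', elemLen f :=
        Finset.sum_insert henerase
      have h2 : ∑ f ∈ D.erase e', elemLen f + elemLen e' = packLen D :=
        Finset.sum_erase_add D _ he'D
      have h3 : elemLen e' = l - 1 := by simp [elemLen, hcyc, hlen]
      have h4 : elemLen e = l := by show (if true = true then e'.verts.length else e'.verts.length - 1) = l; simp; omega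
      omega
    · rw [← hVerts, packVerts, packVerts, hD', Finset.biUnion_insert, hEV,
        ← Finset.biUnion_insert, Finset.insert_erase he'D]
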